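/- Let V > 0, r_d > 0, k > V/r_d, and let r, θ : ℝ → ℝ be differentiable functions satisfying for all t ≥ t₀: r(t) ≥ r_d, θ(t) ∈ [0, π], r'(t) = −V·cos θ(t), and θ'(t) = k·sign(cos θ(t) − √(1 − (r_d/r(t))²)) + V·sin θ(t)/r(t). Then there exists t̄ ≥ t₀ such that θ(t) ∈ [0, π/2] for all t ≥ t̄. -/

import Mathlib

open Real

theorem saturated_law_bearing_reaches_first_quadrant
    (V r_d k t₀ : ℝ) (r θ : ℝ → ℝ)
    (hV : 0 < V) (hrd : 0 < r_d) (hk : V / r_d < k)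
    (hr : ∀ t, t₀ ≤ t → r_d ≤ r t)
    (hθrange : ∀ t, t₀ ≤ t → θ t ∈ Set.Icc 0 π)
    (hr' : ∀ t, t₀ ≤ t → HasDerivAt r (-V * Real.cos (θ t)) t)
    (hθ' : ∀ t, t₀ ≤ t → HasDerivAt θ
      (k * Real.sign (Real.cos (θ t) - Real.sqrt (1 - (r_d / r t) ^ 2))
        + V * Real.sin (θ t) / r t) t) :
    ∃ tbar : ℝ, t₀ ≤ tbar ∧ ∀ t, tbar ≤ t → θ t ∈ Set.Icc 0 (π / 2) := by
  set c := k - V / r_d with hc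
  have hcpos : 0 < c := by simp only [hc]; linarith
  -- Key derivative bound: while θ > π/2, the derivative of θ is at most -c
  have key : ∀ u, t₀ ≤ u → π / 2 < θ u →
      k * Real.sign (Real.cos (θ u) - Real.sqrt (1 - (r_d / r u) ^ 2))
        + V * Real.sin (θ u) / r u ≤ -c := by
    intro u hu hθu
    have hθmem := hθrange u hu
    have hcos : Real.cos (θ u) < 0 :=
      Real.cos_neg_of_pi_div_two_lt_of_lt hθu (by linarith [hθmem.2, Real.pi_pos])
    have hsign : Real.sign (Real.cos (θ u) - Real.sqrt (1 - (r_d / r u) ^ 2)) = -1 :=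
      Real.sign_of_neg (by nlinarith [Real.sqrt_nonneg (1 - (r_d / r u) ^ 2)])
    have hru := hr u hu
    have hsin1 : Real.sin (θ u) ≤ 1 := Real.sin_le_one _
    have hsin0 : 0 ≤ Real.sin (θ u) := Real.sin_nonneg_of_nonneg_of_le_pi hθmem.1 hθmem.2
    have hdiv : V * Real.sin (θ u) / r u ≤ V / r_d :=
      div_le_div₀ hV.le (by nlinarith) hrd hru
    rw [hsign]
    simp only [hc]
    linarith
  -- Descent estimate: if θ > π/2 on the open interval, θ u + c * u decreases
  have descent : ∀ a b : ℝ, t₀ ≤ a → a ≤ b → (∀ u, a < u → u < b → π / 2 < θ u) →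
      θ b + c * b ≤ θ a + c * a := by
    intro a b ha hab hmid
    have hanti : AntitoneOn (fun u => θ u + c * u) (Set.Icc a b) := by
      apply antitoneOn_of_deriv_nonpos (convex_Icc a b)
      · intro u hu
        exact (((hθ' u (le_trans ha hu.1)).add
          ((hasDerivAt_id u).const_mul c)).continuousAt).continuousWithinAt
      · intro u hu
        rw [interior_Icc] at hu
        exact ((hθ' u (le_trans ha hu.1.le)).add
          ((hasDerivAt_id u).const_mul c)).differentiableAt.differentiableWithinAt
      · intro u hu
        rw [interior_Icc] at hu
        have hd : HasDerivAt (fun u => θ u + c * u)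
            (k * Real.sign (Real.cos (θ u) - Real.sqrt (1 - (r_d / r u) ^ 2))
              + V * Real.sin (θ u) / r u + c * 1) u := by
          exact (hθ' u (le_trans ha hu.1.le)).add ((hasDerivAt_id u).const_mul c)
        rw [hd.deriv]
        have hk2 := key u (le_trans ha hu.1.le) (hmid u hu.1 hu.2)
        simp only [mul_one]
        linarith
    exact hanti (Set.left_mem_Icc.mpr hab) (Set.right_mem_Icc.mpr hab) hab
  -- Barrier: once θ ≤ π/2, it stays ≤ π/2
  have barrier : ∀ s, t₀ ≤ s → θ s ≤ π / 2 → ∀ t, s ≤ t → θ t ≤ π / 2 := by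
    intro s hs hθs t hst
    by_contra h
    push_neg at h
    set S := Set.Icc s t ∩ θ ⁻¹' Set.Iic (π / 2) with hS
    have hSne : S.Nonempty := ⟨s, ⟨le_refl s, hst⟩, hθs⟩
    have hSbdd : BddAbove S := ⟨t, fun u hu => hu.1.2⟩
    have hcont : ContinuousOn θ (Set.Icc s t) := fun u hu =>
      ((hθ' u (le_trans hs hu.1)).continuousAt).continuousWithinAt
    have hScl : IsClosed S :=
      hcont.preimage_isClosed_of_isClosed isClosed_Icc isClosed_Iic
    have hmem : sSup S ∈ S := hScl.csSup_mem hSne hSbdd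
    set m := sSup S with hm
    have hmlet : m ≤ t := hmem.1.2
    have hsm : s ≤ m := hmem.1.1
    have hθm : θ m ≤ π / 2 := hmem.2
    have hmid : ∀ u, m < u → u < t → π / 2 < θ u := by
      intro u hmu hut
      by_contra hle
      push_neg at hle
      have huS : u ∈ S := ⟨⟨le_trans hsm hmu.le, hut.le⟩, hle⟩
      exact absurd (le_csSup hSbdd huS) (not_le.mpr hmu)
    have hdes := descent m t (le_trans hs hsm) hmlet hmid
    have hcmt : c * m ≤ c * t := by
      exact mul_le_mul_of_nonneg_left hmlet hcpos.le
    linarith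
  -- Finite-time reaching: there is s ∈ [t₀, t₀ + π/c] with θ s ≤ π/2
  have hπc : 0 < π / c := div_pos Real.pi_pos hcpos
  have hfind : ∃ s, t₀ ≤ s ∧ θ s ≤ π / 2 := by
    by_contra h
    push_neg at h
    have hdes := descent t₀ (t₀ + π / c) le_rfl (by linarith)
      (fun u hu1 hu2 => h u hu1.le)
    have h1 := (hθrange t₀ le_rfl).2
    have h2 := h (t₀ + π / c) (by linarith)
    have hcancel : c * (π / c) = π := mul_div_cancel₀ π hcpos.ne'
    nlinarith [Real.pi_pos]
  obtain ⟨s, hs, hθs⟩ := hfind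
  refine ⟨s, hs, fun t ht => ⟨(hθrange t (le_trans hs ht)).1, barrier s hs hθs t ht⟩⟩
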